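/- Work in the polynomial ring ℚ[x_2, x_3, x_4] and let ĝ(ζ) := ζ + x_2ζ^3 + x_3ζ^4 + x_4ζ^5 ∈ ℚ[x_2,x_3,x_4][[ζ]]. Define Δ̂_1(ζ) := ĝ(ζ) − ζ and Δ̂_{m+1}(ζ) := Δ̂_m(ĝ(ζ)) − Δ̂_m(ζ) for m ≥ 1. Then for every m ≥ 2, the coefficient of ζ^{2m+3} in Δ̂_m equals x_2^{m+1}·(2m+1)!!·Σ_{j=1}^{m} (j−1)/(2j+1) + x_2^{m−1}·x_4·(2m+1)!!·Σ_{j=1}^{m} 1/(2j+1) + x_2^{m−2}·x_3^2·(2m+1)!!·Σ_{j=1}^{m} (2j/(2j+1) − (2j)!!/(2j+1)!!). -/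

import Mathlib

/-- Composition of formal power series: `f.comp g = f ∘ g`, the power series obtained by
substituting `g` into `f`.  (This gives the usual composition whenever the constant
coefficient of `g` is zero.) -/
noncomputable def PowerSeries.comp {R : Type*} [CommSemiring R] (f g : PowerSeries R) :
    PowerSeries R :=
  PowerSeries.mk fun n =>
    ∑ i ∈ Finset.range (n + 1), PowerSeries.coeff i f * PowerSeries.coeff n (g ^ i)

/-- The polynomial ring `ℚ[x₂, x₃, x₄]`, with `x₂ = X 0`, `x₃ = X 1`, `x₄ = X 2`. -/
abbrev Rq : Type := MvPolynomial (Fin 3) ℚ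

/-- The power series `ĝ(ζ) = ζ + x₂ζ³ + x₃ζ⁴ + x₄ζ⁵` over `ℚ[x₂, x₃, x₄]`. -/
noncomputable def ghat : PowerSeries Rq :=
  PowerSeries.X
    + PowerSeries.C (R := Rq) (MvPolynomial.X 0) * PowerSeries.X ^ 3
    + PowerSeries.C (R := Rq) (MvPolynomial.X 1) * PowerSeries.X ^ 4
    + PowerSeries.C (R := Rq) (MvPolynomial.X 2) * PowerSeries.X ^ 5

open Nat PowerSeries

namespace DeltaAux

noncomputable def x2 : Rq := MvPolynomial.X 0
noncomputable def x3 : Rq := MvPolynomial.X 1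
noncomputable def x4 : Rq := MvPolynomial.X 2

noncomputable def u : PowerSeries Rq :=
  PowerSeries.C (R := Rq) x2 * X ^ 2 + PowerSeries.C (R := Rq) x3 * X ^ 3 + PowerSeries.C (R := Rq) x4 * X ^ 4

noncomputable def v : PowerSeries Rq :=
  PowerSeries.C (R := Rq) x2 + PowerSeries.C (R := Rq) x3 * X + PowerSeries.C (R := Rq) x4 * X ^ 2

lemma u_eq : u = X ^ 2 * v := by unfold u v; ring

lemma ghat_eq : ghat = X * (1 + u) := by unfold ghat u x2 x3 x4; ring

lemma coeff_u_pow_eq_zero {d k : ℕ} (h : d < 2 * k) : coeff (R := Rq) d (u ^ k) = 0 := by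
  rw [u_eq, mul_pow, ← pow_mul, PowerSeries.coeff_X_pow_mul', if_neg (by omega)]

lemma coeff_u_two : coeff (R := Rq) 2 u = x2 := by
  simp [u, PowerSeries.coeff_X_pow]

lemma coeff_u_three : coeff (R := Rq) 3 u = x3 := by
  simp [u, PowerSeries.coeff_X_pow]

lemma coeff_u_four : coeff (R := Rq) 4 u = x4 := by
  simp [u, PowerSeries.coeff_X_pow]

lemma coeff_u_sq_four : coeff (R := Rq) 4 (u ^ 2) = x2 ^ 2 := by
  have : u ^ 2 = X ^ 4 * v ^ 2 := by rw [u_eq]; ring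
  rw [this, show (4 : ℕ) = 0 + 4 by ring, PowerSeries.coeff_X_pow_mul]
  simp [v, PowerSeries.coeff_zero_eq_constantCoeff]

lemma coeff_u_small {d : ℕ} (h : d < 2) : coeff (R := Rq) d u = 0 := by
  have := coeff_u_pow_eq_zero (d := d) (k := 1) (by omega)
  rwa [pow_one] at this

lemma coeff_one_add_u_pow (i d : ℕ) (hd : d ≤ 4) :
    coeff (R := Rq) d ((1 + u) ^ i) =
      coeff (R := Rq) d 1 + (i : Rq) * coeff (R := Rq) d u + (i.choose 2 : Rq) * coeff (R := Rq) d (u ^ 2) := by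
  have h : (1 + u) ^ i
      = ∑ k ∈ Finset.range (i + 1), (i.choose k : PowerSeries Rq) * u ^ k := by
    rw [add_comm, add_pow]
    refine Finset.sum_congr rfl fun k _ => by ring
  rw [h, map_sum]
  have hterm : ∀ k : ℕ, coeff (R := Rq) d ((i.choose k : PowerSeries Rq) * u ^ k)
      = (i.choose k : Rq) * coeff (R := Rq) d (u ^ k) := by
    intro k
    rw [show ((i.choose k : ℕ) : PowerSeries Rq) = PowerSeries.C (R := Rq) (i.choose k : Rq) by
      push_cast; rfl, PowerSeries.coeff_C_mul]
  simp only [hterm]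
  have e1 : ∑ k ∈ Finset.range (i + 1), (i.choose k : Rq) * coeff (R := Rq) d (u ^ k)
      = ∑ k ∈ Finset.range (i + 3), (i.choose k : Rq) * coeff (R := Rq) d (u ^ k) := by
    refine Finset.sum_subset (Finset.range_subset_range.2 (by omega)) fun k hk hk' => ?_
    simp only [Finset.mem_range] at hk hk'
    rw [Nat.choose_eq_zero_of_lt (by omega)]
    simp
  have e2 : ∑ k ∈ Finset.range (i + 3), (i.choose k : Rq) * coeff (R := Rq) d (u ^ k)
      = ∑ k ∈ Finset.range 3, (i.choose k : Rq) * coeff (R := Rq) d (u ^ k) := by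
    refine (Finset.sum_subset (Finset.range_subset_range.2 (by omega)) fun k hk hk' => ?_).symm
    simp only [Finset.mem_range] at hk hk'
    rw [coeff_u_pow_eq_zero (by omega), mul_zero]
  rw [e1, e2, Finset.sum_range_succ, Finset.sum_range_succ, Finset.sum_range_succ,
    Finset.sum_range_zero]
  simp [Nat.choose_one_right]

lemma coeff_ghat_pow (i d : ℕ) (hd : d ≤ 4) :
    coeff (R := Rq) (i + d) (ghat ^ i) =
      coeff (R := Rq) d 1 + (i : Rq) * coeff (R := Rq) d u + (i.choose 2 : Rq) * coeff (R := Rq) d (u ^ 2) := by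
  rw [ghat_eq, mul_pow, add_comm i d, PowerSeries.coeff_X_pow_mul,
    coeff_one_add_u_pow i d hd]

lemma g0 (i : ℕ) : coeff (R := Rq) i (ghat ^ i) = 1 := by
  have := coeff_ghat_pow i 0 (by omega)
  rw [add_zero] at this
  rw [this, coeff_u_small (by omega), coeff_u_pow_eq_zero (k := 2) (by omega)]
  simp

lemma g1 (i : ℕ) : coeff (R := Rq) (i + 1) (ghat ^ i) = 0 := by
  rw [coeff_ghat_pow i 1 (by omega), coeff_u_small (by omega),
    coeff_u_pow_eq_zero (k := 2) (by omega)]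
  simp [PowerSeries.coeff_one]

lemma g2 (i : ℕ) : coeff (R := Rq) (i + 2) (ghat ^ i) = (i : Rq) * x2 := by
  rw [coeff_ghat_pow i 2 (by omega), coeff_u_two,
    coeff_u_pow_eq_zero (k := 2) (by omega)]
  simp [PowerSeries.coeff_one]

lemma g3 (i : ℕ) : coeff (R := Rq) (i + 3) (ghat ^ i) = (i : Rq) * x3 := by
  rw [coeff_ghat_pow i 3 (by omega), coeff_u_three,
    coeff_u_pow_eq_zero (k := 2) (by omega)]
  simp [PowerSeries.coeff_one]

lemma g4 (i : ℕ) : coeff (R := Rq) (i + 4) (ghat ^ i)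
    = (i : Rq) * x4 + (i.choose 2 : Rq) * x2 ^ 2 := by
  rw [coeff_ghat_pow i 4 (by omega), coeff_u_four, coeff_u_sq_four]
  simp [PowerSeries.coeff_one]

lemma glt {n i : ℕ} (h : n < i) : coeff (R := Rq) n (ghat ^ i) = 0 := by
  rw [ghat_eq, mul_pow, PowerSeries.coeff_X_pow_mul', if_neg (by omega)]

lemma coeff_comp (f : PowerSeries Rq) (n : ℕ) :
    coeff (R := Rq) n (f.comp ghat)
      = ∑ i ∈ Finset.range (n + 1), coeff (R := Rq) i f * coeff (R := Rq) n (ghat ^ i) := by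
  simp [PowerSeries.comp]

lemma comp_sub_eq (D : PowerSeries Rq) (n : ℕ) :
    coeff (R := Rq) n (D.comp ghat - D)
      = ∑ i ∈ Finset.range n, coeff (R := Rq) i D * coeff (R := Rq) n (ghat ^ i) := by
  rw [map_sub, coeff_comp, Finset.sum_range_succ, g0, mul_one]
  ring

section Step
variable {m : ℕ} {D : PowerSeries Rq}
  (hz : ∀ k, k ≤ 2 * m → coeff (R := Rq) k D = 0)

include hz

lemma sum_low_zero {n : ℕ} :
    ∑ i ∈ Finset.range (2 * m + 1), coeff (R := Rq) i D * coeff (R := Rq) n (ghat ^ i) = 0 := by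
  refine Finset.sum_eq_zero fun i hi => ?_
  simp only [Finset.mem_range] at hi
  rw [hz i (by omega), zero_mul]

lemma step_zero {n : ℕ} (hn : n ≤ 2 * m + 2) :
    coeff (R := Rq) n (D.comp ghat - D) = 0 := by
  rw [comp_sub_eq]
  refine Finset.sum_eq_zero fun i hi => ?_
  simp only [Finset.mem_range] at hi
  rcases le_or_gt i (2 * m) with h | h
  · rw [hz i h, zero_mul]
  · have h1 : i = 2 * m + 1 := by omega
    have h2 : n = i + 1 := by omega
    rw [h2, g1, mul_zero]

lemma step_c3 :
    coeff (R := Rq) (2 * m + 3) (D.comp ghat - D)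
      = ((2 * m + 1 : ℕ) : Rq) * x2 * coeff (R := Rq) (2 * m + 1) D := by
  rw [comp_sub_eq, show 2 * m + 3 = (2 * m + 1) + 1 + 1 by omega,
    Finset.sum_range_succ, Finset.sum_range_succ]
  rw [show (2 * m + 1) + 1 + 1 = (2 * m + 1) + 2 by omega, g2,
    show (2 * m + 1) + 2 = (2 * m + 1 + 1) + 1 by omega, g1,
    sum_low_zero hz]
  ring

lemma step_c4 :
    coeff (R := Rq) (2 * m + 4) (D.comp ghat - D)
      = ((2 * m + 2 : ℕ) : Rq) * x2 * coeff (R := Rq) (2 * m + 2) D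
        + ((2 * m + 1 : ℕ) : Rq) * x3 * coeff (R := Rq) (2 * m + 1) D := by
  rw [comp_sub_eq, show 2 * m + 4 = (2 * m + 1) + 1 + 1 + 1 by omega,
    Finset.sum_range_succ, Finset.sum_range_succ, Finset.sum_range_succ]
  rw [show (2 * m + 1) + 1 + 1 + 1 = (2 * m + 1) + 3 by omega, g3,
    show (2 * m + 1) + 3 = (2 * m + 1 + 1) + 2 by omega, g2,
    show (2 * m + 1 + 1) + 2 = (2 * m + 1 + 1 + 1) + 1 by omega, g1,
    sum_low_zero hz]
  push_cast
  ring

lemma step_c5 :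
    coeff (R := Rq) (2 * m + 5) (D.comp ghat - D)
      = ((2 * m + 3 : ℕ) : Rq) * x2 * coeff (R := Rq) (2 * m + 3) D
        + ((2 * m + 2 : ℕ) : Rq) * x3 * coeff (R := Rq) (2 * m + 2) D
        + (((2 * m + 1 : ℕ) : Rq) * x4 + (((2 * m + 1).choose 2 : ℕ) : Rq) * x2 ^ 2)
            * coeff (R := Rq) (2 * m + 1) D := by
  rw [comp_sub_eq, show 2 * m + 5 = (2 * m + 1) + 1 + 1 + 1 + 1 by omega,
    Finset.sum_range_succ, Finset.sum_range_succ, Finset.sum_range_succ,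
    Finset.sum_range_succ]
  rw [show (2 * m + 1) + 1 + 1 + 1 + 1 = (2 * m + 1) + 4 by omega, g4,
    show (2 * m + 1) + 4 = (2 * m + 1 + 1) + 3 by omega, g3,
    show (2 * m + 1 + 1) + 3 = (2 * m + 1 + 1 + 1) + 2 by omega, g2,
    show (2 * m + 1 + 1 + 1) + 2 = (2 * m + 1 + 1 + 1 + 1) + 1 by omega, g1]
  have hlow : ∑ i ∈ Finset.range (2 * m + 1),
      coeff (R := Rq) i D * coeff (R := Rq) ((2 * m + 1 + 1 + 1 + 1) + 1) (ghat ^ i) = 0 := by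
    refine Finset.sum_eq_zero fun i hi => ?_
    simp only [Finset.mem_range] at hi
    rw [hz i (by omega), zero_mul]
  rw [hlow]
  push_cast
  ring

end Step

noncomputable def s1 (m : ℕ) : ℚ := ∑ j ∈ Finset.Icc 1 m, ((j : ℚ) - 1) / (2 * (j : ℚ) + 1)

noncomputable def s2 (m : ℕ) : ℚ := ∑ j ∈ Finset.Icc 1 m, 1 / (2 * (j : ℚ) + 1)

noncomputable def s3 (m : ℕ) : ℚ := ∑ j ∈ Finset.Icc 1 m,
  (2 * (j : ℚ) / (2 * (j : ℚ) + 1) - (((2 * j)‼ : ℕ) : ℚ) / (((2 * j + 1)‼ : ℕ) : ℚ))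

noncomputable def Aa (m : ℕ) : Rq := (((2 * m - 1)‼ : ℕ) : Rq) * x2 ^ m

noncomputable def Bb (m : ℕ) : Rq :=
  ((((2 * m + 1)‼ : ℕ) : Rq) - (((2 * m)‼ : ℕ) : Rq)) * x2 ^ (m - 1) * x3

noncomputable def Cc (m : ℕ) : Rq :=
  x2 ^ (m + 1) * MvPolynomial.C ((((2 * m + 1)‼ : ℕ) : ℚ) * s1 m)
    + x2 ^ (m - 1) * x4 * MvPolynomial.C ((((2 * m + 1)‼ : ℕ) : ℚ) * s2 m)
    + x2 ^ (m - 2) * x3 ^ 2 * MvPolynomial.C ((((2 * m + 1)‼ : ℕ) : ℚ) * s3 m)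

lemma dfac_cast (n : ℕ) : ((n + 2)‼ : ℚ) = ((n : ℚ) + 2) * (n‼ : ℚ) := by
  rw [Nat.doubleFactorial_add_two]; push_cast; ring

lemma idA (m : ℕ) (hm : 1 ≤ m) :
    Aa (m + 1) = ((2 * m + 1 : ℕ) : Rq) * x2 * Aa m := by
  obtain ⟨k, rfl⟩ := Nat.exists_eq_add_of_le' hm
  unfold Aa
  rw [show 2 * (k + 1 + 1) - 1 = (2 * k + 1) + 2 by omega,
    show 2 * (k + 1) - 1 = 2 * k + 1 by omega,
    Nat.doubleFactorial_add_two]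
  push_cast
  ring

lemma idB (m : ℕ) (hm : 1 ≤ m) :
    Bb (m + 1) = ((2 * m + 2 : ℕ) : Rq) * x2 * Bb m
      + ((2 * m + 1 : ℕ) : Rq) * x3 * Aa m := by
  obtain ⟨k, rfl⟩ := Nat.exists_eq_add_of_le' hm
  unfold Bb Aa
  rw [show 2 * (k + 1 + 1) + 1 = ((2 * k + 1) + 2) + 2 by omega,
    show 2 * (k + 1 + 1) = ((2 * k) + 2) + 2 by omega,
    show 2 * (k + 1) + 1 = (2 * k + 1) + 2 by omega,
    show 2 * (k + 1) - 1 = 2 * k + 1 by omega,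
    show 2 * (k + 1) = (2 * k) + 2 by omega,
    show k + 1 + 1 - 1 = k + 1 by omega,
    show k + 1 - 1 = k by omega]
  rw [Nat.doubleFactorial_add_two (2 * k + 1 + 2), Nat.doubleFactorial_add_two (2 * k + 2),
    Nat.doubleFactorial_add_two (2 * k + 1), Nat.doubleFactorial_add_two (2 * k)]
  push_cast
  ring

lemma I1 (m : ℕ) :
    (((2 * (m + 1) + 1)‼ : ℕ) : ℚ) * s1 (m + 1)
      = (2 * (m : ℚ) + 3) * ((((2 * m + 1)‼ : ℕ) : ℚ) * s1 m)
        + (m : ℚ) * (((2 * m + 1)‼ : ℕ) : ℚ) := by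
  unfold s1
  rw [Finset.sum_Icc_succ_top (show 1 ≤ m + 1 by omega),
    show 2 * (m + 1) + 1 = (2 * m + 1) + 2 by omega, dfac_cast]
  have h : 2 * ((m : ℚ) + 1) + 1 ≠ 0 := by positivity
  push_cast
  field_simp
  ring

lemma I2 (m : ℕ) :
    (((2 * (m + 1) + 1)‼ : ℕ) : ℚ) * s2 (m + 1)
      = (2 * (m : ℚ) + 3) * ((((2 * m + 1)‼ : ℕ) : ℚ) * s2 m)
        + (((2 * m + 1)‼ : ℕ) : ℚ) := by
  unfold s2
  rw [Finset.sum_Icc_succ_top (show 1 ≤ m + 1 by omega),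
    show 2 * (m + 1) + 1 = (2 * m + 1) + 2 by omega, dfac_cast]
  have h : 2 * ((m : ℚ) + 1) + 1 ≠ 0 := by positivity
  push_cast
  field_simp
  ring

lemma I3 (m : ℕ) :
    (((2 * (m + 1) + 1)‼ : ℕ) : ℚ) * s3 (m + 1)
      = (2 * (m : ℚ) + 3) * ((((2 * m + 1)‼ : ℕ) : ℚ) * s3 m)
        + (2 * (m : ℚ) + 2) * ((((2 * m + 1)‼ : ℕ) : ℚ) - (((2 * m)‼ : ℕ) : ℚ)) := by
  unfold s3
  rw [Finset.sum_Icc_succ_top (show 1 ≤ m + 1 by omega),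
    show 2 * (m + 1) + 1 = (2 * m + 1) + 2 by omega,
    show 2 * (m + 1) = (2 * m) + 2 by omega, dfac_cast, dfac_cast]
  have h : 2 * ((m : ℚ) + 1) + 1 ≠ 0 := by positivity
  have h2 : (((2 * m + 1)‼ : ℕ) : ℚ) ≠ 0 := by
    exact_mod_cast Nat.cast_pos.mpr (Nat.doubleFactorial_pos _) |>.ne'
  push_cast
  field_simp
  ring

lemma choose_two_odd (m : ℕ) : (2 * m + 1).choose 2 = (2 * m + 1) * m := by
  rw [Nat.choose_two_right, show 2 * m + 1 - 1 = 2 * m by omega,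
    Nat.mul_div_assoc _ (dvd_mul_right 2 m), Nat.mul_div_cancel_left m (by norm_num)]

lemma Cc_one : Cc 1 = x4 := by
  unfold Cc s1 s2 s3
  norm_num [Finset.Icc_self, Finset.sum_singleton]

lemma idC (m : ℕ) (hm : 1 ≤ m) :
    Cc (m + 1) = ((2 * m + 3 : ℕ) : Rq) * x2 * Cc m
      + ((2 * m + 2 : ℕ) : Rq) * x3 * Bb m
      + (((2 * m + 1 : ℕ) : Rq) * x4 + (((2 * m + 1).choose 2 : ℕ) : Rq) * x2 ^ 2)
          * Aa m := by
  obtain ⟨k, rfl⟩ := Nat.exists_eq_add_of_le' hm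
  rcases Nat.eq_zero_or_pos k with rfl | hk
  · rw [Cc_one]
    unfold Cc Bb Aa s1 s2 s3
    norm_num [Finset.sum_Icc_succ_top, Finset.Icc_self, Finset.sum_singleton,
      Nat.choose, x2, x3, x4, map_ofNat]
    ring
  · obtain ⟨k, rfl⟩ := Nat.exists_eq_add_of_le' hk
    unfold Cc Bb Aa
    rw [show k + 1 + 1 + 1 - 1 = k + 2 by omega, show k + 1 + 1 + 1 - 2 = k + 1 by omega,
      show k + 1 + 1 - 1 = k + 1 by omega, show k + 1 + 1 - 2 = k by omega,
      I1 (k + 1 + 1), I2 (k + 1 + 1), I3 (k + 1 + 1),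
      choose_two_odd (k + 1 + 1),
      show (2 * (k + 1 + 1) + 1)‼ = (2 * (k + 1 + 1) + 1) * (2 * (k + 1 + 1) - 1)‼ by
        rw [show 2 * (k + 1 + 1) + 1 = (2 * (k + 1 + 1) - 1) + 2 by omega,
          Nat.doubleFactorial_add_two]]
    simp only [map_add, map_mul, map_sub, map_natCast, map_ofNat, map_one,
      Nat.cast_add, Nat.cast_mul, Nat.cast_ofNat, Nat.cast_one, Nat.succ_eq_add_one]
    push_cast
    ring

lemma coeff_delta1 (n : ℕ) :
    coeff (R := Rq) n (ghat - X) =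
      (if n = 3 then x2 else 0) + (if n = 4 then x3 else 0) + (if n = 5 then x4 else 0) := by
  rw [show ghat - X = PowerSeries.C (R := Rq) x2 * X ^ 3 + PowerSeries.C (R := Rq) x3 * X ^ 4
      + PowerSeries.C (R := Rq) x4 * X ^ 5 by unfold ghat x2 x3 x4; ring]
  simp [PowerSeries.coeff_X_pow]

lemma main (Δ : ℕ → PowerSeries Rq)
    (hΔ1 : Δ 1 = ghat - PowerSeries.X)
    (hΔ : ∀ m : ℕ, 1 ≤ m → Δ (m + 1) = PowerSeries.comp (Δ m) ghat - Δ m) :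
    ∀ m : ℕ, 1 ≤ m →
      (∀ k, k ≤ 2 * m → coeff (R := Rq) k (Δ m) = 0)
        ∧ coeff (R := Rq) (2 * m + 1) (Δ m) = Aa m
        ∧ coeff (R := Rq) (2 * m + 2) (Δ m) = Bb m
        ∧ coeff (R := Rq) (2 * m + 3) (Δ m) = Cc m := by
  intro m hm
  induction m, hm using Nat.le_induction with
  | base =>
    refine ⟨fun k hk => ?_, ?_, ?_, ?_⟩
    · rw [hΔ1, coeff_delta1]
      interval_cases k <;> norm_num
    · rw [hΔ1, coeff_delta1]
      norm_num [Aa]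
    · rw [hΔ1, coeff_delta1]
      norm_num [Bb]
    · rw [hΔ1, coeff_delta1, Cc_one]
      norm_num
  | succ n hn ih =>
    obtain ⟨ihz, iha, ihb, ihc⟩ := ih
    have hD := hΔ n hn
    refine ⟨fun k hk => ?_, ?_, ?_, ?_⟩
    · rw [hD]
      exact step_zero ihz (by omega)
    · rw [hD, show 2 * (n + 1) + 1 = 2 * n + 3 by omega, step_c3 ihz, iha, idA n hn]
    · rw [hD, show 2 * (n + 1) + 2 = 2 * n + 4 by omega, step_c4 ihz, iha, ihb,
        idB n hn]
    · rw [hD, show 2 * (n + 1) + 3 = 2 * n + 5 by omega, step_c5 ihz, iha, ihb, ihc,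
        idC n hn]

end DeltaAux

open Nat

theorem delta_hat_third_coefficient
    (Δ : ℕ → PowerSeries Rq)
    (hΔ1 : Δ 1 = ghat - PowerSeries.X)
    (hΔ : ∀ m : ℕ, 1 ≤ m → Δ (m + 1) = PowerSeries.comp (Δ m) ghat - Δ m) :
    ∀ m : ℕ, 2 ≤ m →
      PowerSeries.coeff (R := Rq) (2 * m + 3) (Δ m) =
        MvPolynomial.X 0 ^ (m + 1) *
            MvPolynomial.C ((((2 * m + 1)‼ : ℕ) : ℚ) *
              ∑ j ∈ Finset.Icc 1 m, ((j : ℚ) - 1) / (2 * (j : ℚ) + 1))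
          + MvPolynomial.X 0 ^ (m - 1) * MvPolynomial.X 2 *
              MvPolynomial.C ((((2 * m + 1)‼ : ℕ) : ℚ) *
                ∑ j ∈ Finset.Icc 1 m, 1 / (2 * (j : ℚ) + 1))
          + MvPolynomial.X 0 ^ (m - 2) * MvPolynomial.X 1 ^ 2 *
              MvPolynomial.C ((((2 * m + 1)‼ : ℕ) : ℚ) *
                ∑ j ∈ Finset.Icc 1 m,
                  (2 * (j : ℚ) / (2 * (j : ℚ) + 1)
                    - (((2 * j)‼ : ℕ) : ℚ) / (((2 * j + 1)‼ : ℕ) : ℚ))) := by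
  intro m hm
  have h := (DeltaAux.main Δ hΔ1 hΔ m (by omega)).2.2.2
  rw [h]
  simp only [DeltaAux.Cc, DeltaAux.s1, DeltaAux.s2, DeltaAux.s3,
    DeltaAux.x2, DeltaAux.x3, DeltaAux.x4]
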